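/- Let S be a set of states, τ ⊆ S × S a transition relation, q, r ⊆ S, and suppose there exist a well-founded partial order (A, ≤), a function f : S → A, and an invariant φ ⊆ S such that: (1) every initial state not in q is in φ; (2) if s ∈ φ, (s,s') ∈ τ and s' ∉ q then s' ∈ φ; (3) if s ∈ φ, (s,s') ∈ τ and s' ∉ q then f(s') ≤ f(s); (4) if s ∈ φ ∩ r, (s,s') ∈ τ and s' ∉ q then f(s') < f(s). Then every trace (infinite sequence s₀, s₁, ... with s₀ initial and (sᵢ, s_{i+1}) ∈ τ for all i) that visits r infinitely often eventually visits q. -/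

import Mathlib

/-- Ranking-based proof rule for liveness: given a well-founded partial order
`A`, a ranking function `f` and an invariant `φ` satisfying premises (1)–(4),
every trace visiting `r` infinitely often eventually visits `q`. -/
theorem stmt_13 (S A : Type*) [PartialOrder A]
    (hwf : WellFounded ((· < ·) : A → A → Prop))
    (τ : S → S → Prop) (ι q r φ : Set S) (f : S → A)
    (h1 : ∀ s ∈ ι, s ∉ q → s ∈ φ)
    (h2 : ∀ s s', s ∈ φ → τ s s' → s' ∉ q → s' ∈ φ)
    (h3 : ∀ s s', s ∈ φ → τ s s' → s' ∉ q → f s' ≤ f s)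
    (h4 : ∀ s s', s ∈ φ → s ∈ r → τ s s' → s' ∉ q → f s' < f s)
    (tr : ℕ → S) (h0 : tr 0 ∈ ι) (hτ : ∀ i, τ (tr i) (tr (i + 1)))
    (hfair : ∀ N, ∃ i, N ≤ i ∧ tr i ∈ r) :
    ∃ i, tr i ∈ q := by
  by_contra hq
  push_neg at hq
  have hφ : ∀ i, tr i ∈ φ := by
    intro i
    induction i with
    | zero => exact h1 _ h0 (hq 0)
    | succ n ih => exact h2 _ _ ih (hτ n) (hq (n + 1))
  have hmono : ∀ i j, i ≤ j → f (tr j) ≤ f (tr i) := by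
    intro i j hij
    induction j with
    | zero => simp_all
    | succ n ih =>
      rcases Nat.lt_or_ge i (n + 1) with h | h
      · exact (h3 _ _ (hφ n) (hτ n) (hq (n + 1))).trans (ih (Nat.lt_succ_iff.mp h))
      · have : i = n + 1 := le_antisymm (by omega) h
        simp [this]
  -- build strictly decreasing sequence
  let g : ℕ → ℕ := fun k => Nat.rec 0 (fun _ m => (hfair m).choose + 1) k
  have hdec : ∀ k, f (tr (g (k + 1))) < f (tr (g k)) := by
    intro k
    obtain ⟨hle, hr⟩ := (hfair (g k)).choose_spec
    calc f (tr ((hfair (g k)).choose + 1))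
        < f (tr ((hfair (g k)).choose)) :=
          h4 _ _ (hφ _) hr (hτ _) (hq _)
      _ ≤ f (tr (g k)) := hmono _ _ hle
  exact (RelEmbedding.natGT (fun k => f (tr (g k))) hdec).not_wellFounded hwf
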